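/- Let N ≥ 1, let V, Ṽ : ℝ^N → ℝ^N be continuous, and let X̃ : ℝ × ℝ^N → ℝ^N be a C¹ flow of Ṽ. Let T > 0 and let x : [0,T] → ℝ^N be continuously differentiable with x′(s) = V(x(s)) for all s ∈ [0,T]. If the two trajectories have the same endpoint, i.e. x(T) = X̃(T, x(0)), then ∫₀ᵀ D_yX̃(T−s, x(s)) ( V(x(s)) − Ṽ(x(s)) ) ds = 0. -/

import Mathlib

/-- If a trajectory of `V` and the flow of `Ṽ` issued from the same
initial point reach the same endpoint at time `T`, then the Stefanov–Uhlmann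
integral vanishes. -/
theorem stmt_2 (N : ℕ) (hN : 1 ≤ N)
    (V Vt : (Fin N → ℝ) → (Fin N → ℝ)) (hV : Continuous V) (hVt : Continuous Vt)
    (X : ℝ → (Fin N → ℝ) → (Fin N → ℝ))
    (hXC1 : ContDiff ℝ 1 (fun p : ℝ × (Fin N → ℝ) => X p.1 p.2))
    (hX0 : ∀ y, X 0 y = y)
    (hXode : ∀ t y, HasDerivAt (fun τ => X τ y) (Vt (X t y)) t)
    (hXgroup : ∀ s t : ℝ, ∀ y, X (t + s) y = X t (X s y))
    (T : ℝ) (hT : 0 < T)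
    (x : ℝ → (Fin N → ℝ))
    (hx : ∀ s ∈ Set.Icc (0 : ℝ) T, HasDerivWithinAt x (V (x s)) (Set.Icc (0 : ℝ) T) s)
    (hend : x T = X T (x 0)) :
    (∫ s in (0 : ℝ)..T, (fderiv ℝ (X (T - s)) (x s)) (V (x s) - Vt (x s))) = 0 := by
  set Φ : ℝ × (Fin N → ℝ) → (Fin N → ℝ) := fun p => X p.1 p.2 with hΦdef
  have hΦdiff : Differentiable ℝ Φ := hXC1.differentiable one_ne_zero
  -- The slice `X t` is differentiable with derivative `fderiv Φ ∘ inr`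
  have hA : ∀ t y, HasFDerivAt (X t)
      ((fderiv ℝ Φ (t, y)).comp (ContinuousLinearMap.inr ℝ ℝ (Fin N → ℝ))) y := by
    intro t y
    have h1 : HasFDerivAt (fun z : Fin N → ℝ => ((t : ℝ), z))
        (ContinuousLinearMap.inr ℝ ℝ (Fin N → ℝ)) y :=
      HasFDerivAt.prodMk (hasFDerivAt_const t y) (hasFDerivAt_id y)
    exact ((hΦdiff (t, y)).hasFDerivAt).comp y h1
  -- representation of the slice derivative
  have hrepr : ∀ t y (v : Fin N → ℝ),
      fderiv ℝ (X t) y v = fderiv ℝ Φ (t, y) ((0 : ℝ), v) := by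
    intro t y v
    rw [(hA t y).fderiv]
    rfl
  -- time derivative: fderiv Φ (t,y) (1,0) = Vt (X t y)
  have hB : ∀ t y, fderiv ℝ Φ (t, y) ((1 : ℝ), (0 : Fin N → ℝ)) = Vt (X t y) := by
    intro t y
    have h1 : HasDerivAt (fun τ : ℝ => (τ, y)) ((1 : ℝ), (0 : Fin N → ℝ)) t :=
      HasDerivAt.prodMk (hasDerivAt_id t) (hasDerivAt_const t y)
    have h2 : HasDerivAt (fun τ : ℝ => Φ (τ, y))
        (fderiv ℝ Φ (t, y) ((1 : ℝ), (0 : Fin N → ℝ))) t :=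
      by have := ((hΦdiff (t, y)).hasFDerivAt).comp_hasDerivAt t h1; exact this
    exact h2.unique (hXode t y)
  -- the flow intertwines Vt: fderiv (X t) y (Vt y) = Vt (X t y)
  have hC : ∀ t y, (fderiv ℝ (X t) y) (Vt y) = Vt (X t y) := by
    intro t y
    have hg : HasDerivAt (fun s : ℝ => t + s) 1 0 := by
      simpa using (hasDerivAt_id (0 : ℝ)).const_add t
    have h0 : HasDerivAt (fun τ : ℝ => X τ y) (Vt (X t y)) ((fun s : ℝ => t + s) 0) := by
      simpa using hXode t y
    have hL : HasDerivAt (fun s : ℝ => X (t + s) y) (Vt (X t y)) 0 := by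
      have := h0.scomp 0 hg
      rw [one_smul] at this
      exact this
    have hx0 : HasDerivAt (fun s : ℝ => X s y) (Vt y) 0 := by
      have := hXode 0 y
      rwa [hX0] at this
    have hF0 : HasFDerivAt (X t) (fderiv ℝ (X t) y) (X 0 y) := by
      rw [hX0]
      exact (hA t y).differentiableAt.hasFDerivAt
    have hR : HasDerivAt (fun s : ℝ => X t (X s y)) ((fderiv ℝ (X t) y) (Vt y)) 0 :=
      hF0.comp_hasDerivAt 0 hx0
    have heq : (fun s : ℝ => X (t + s) y) = fun s : ℝ => X t (X s y) :=
      funext fun s => hXgroup s t y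
    rw [heq] at hL
    exact hR.unique hL
  -- the curve F and the candidate derivative f'
  set F : ℝ → (Fin N → ℝ) := fun s => X (T - s) (x s) with hFdef
  set f' : ℝ → (Fin N → ℝ) :=
    fun s => (fderiv ℝ (X (T - s)) (x s)) (V (x s) - Vt (x s)) with hf'def
  have hFderiv : ∀ s ∈ Set.Icc (0 : ℝ) T,
      HasDerivWithinAt F (f' s) (Set.Icc (0 : ℝ) T) s := by
    intro s hs
    have h1 : HasDerivWithinAt (fun u : ℝ => T - u) (-1) (Set.Icc (0 : ℝ) T) s := by
      simpa using ((hasDerivAt_id s).const_sub T).hasDerivWithinAt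
    have hγ : HasDerivWithinAt (fun u : ℝ => ((T - u : ℝ), x u))
        ((-1 : ℝ), V (x s)) (Set.Icc (0 : ℝ) T) s := HasDerivWithinAt.prodMk h1 (hx s hs)
    have hΦF : HasFDerivAt Φ (fderiv ℝ Φ (T - s, x s)) (T - s, x s) :=
      (hΦdiff _).hasFDerivAt
    have h2 : HasDerivWithinAt F (fderiv ℝ Φ (T - s, x s) ((-1 : ℝ), V (x s)))
        (Set.Icc (0 : ℝ) T) s := by have := hΦF.comp_hasDerivWithinAt s hγ; exact this
    have hsplit : (((-1 : ℝ), V (x s)) : ℝ × (Fin N → ℝ)) =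
        ((0 : ℝ), V (x s)) - ((1 : ℝ), (0 : Fin N → ℝ)) := by
      simp [Prod.ext_iff]
    have key : fderiv ℝ Φ (T - s, x s) ((-1 : ℝ), V (x s)) = f' s := by
      rw [hsplit, map_sub, hB, ← hrepr, ← hC (T - s) (x s), hf'def, ← map_sub]
    rw [key] at h2
    exact h2
  have hxcont : ContinuousOn x (Set.Icc (0 : ℝ) T) :=
    fun s hs => (hx s hs).continuousWithinAt
  have hFcont : ContinuousOn F (Set.Icc (0 : ℝ) T) :=
    fun s hs => (hFderiv s hs).continuousWithinAt
  -- continuity of the integrand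
  have hf'cont : ContinuousOn f' (Set.Icc (0 : ℝ) T) := by
    have h1 : ContinuousOn (fun s : ℝ => fderiv ℝ Φ (T - s, x s)) (Set.Icc (0 : ℝ) T) :=
      (hXC1.continuous_fderiv one_ne_zero).comp_continuousOn
        (ContinuousOn.prodMk ((continuous_const.sub continuous_id).continuousOn) hxcont)
    have h2 : ContinuousOn (fun s : ℝ => (((0 : ℝ), V (x s) - Vt (x s)) : ℝ × (Fin N → ℝ)))
        (Set.Icc (0 : ℝ) T) :=
      ContinuousOn.prodMk continuousOn_const ((hV.comp_continuousOn hxcont).sub (hVt.comp_continuousOn hxcont))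
    have h3 := h1.clm_apply h2
    have : f' = fun s : ℝ => fderiv ℝ Φ (T - s, x s) ((0 : ℝ), V (x s) - Vt (x s)) :=
      funext fun s => hrepr _ _ _
    rw [this]
    exact h3
  have hint : IntervalIntegrable f' MeasureTheory.volume 0 T := by
    apply ContinuousOn.intervalIntegrable
    rwa [Set.uIcc_of_le hT.le]
  have hmain : (∫ s in (0 : ℝ)..T, f' s) = F T - F 0 :=
    intervalIntegral.integral_eq_sub_of_hasDeriv_right_of_le hT.le hFcont
      (fun s hs =>
        ((hFderiv s (Set.mem_Icc_of_Ioo hs)).hasDerivAt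
          (Icc_mem_nhds hs.1 hs.2)).hasDerivWithinAt) hint
  have hF0 : F 0 = x T := by
    simp only [hFdef, sub_zero]
    exact hend.symm
  have hFT : F T = x T := by
    simp [hFdef, hX0]
  calc (∫ s in (0 : ℝ)..T, (fderiv ℝ (X (T - s)) (x s)) (V (x s) - Vt (x s)))
      = ∫ s in (0 : ℝ)..T, f' s := rfl
    _ = F T - F 0 := hmain
    _ = 0 := by rw [hF0, hFT, sub_self]
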